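/- arXiv:2305.08404 — 2 statements merged into one kernel-verified Lean document; each statement's English description precedes it below -/
import Mathlib

section
/- Let d ≥ 1 and X = [0,1]^{4d}. There do not exist functions g₁ : ℝ^{2d} → ℝ and g₂ : ℝ^{2d} → ℝ such that for all x ∈ X, |g₁(x₁,…,x_{2d}) + g₂(x_{2d+1},…,x_{4d}) − x₁·x_{2d+1}| ≤ 1/8. Consequently, the uniform approximation error of any such additively-separable function to the target h*(x) = x₁·x_{2d+1} on X is at least 1/8. -/
/-- No additively-separable function `g₁(x₁,…,x_{2d}) + g₂(x_{2d+1},…,x_{4d})` can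
uniformly approximate `h*(x) = x₁ · x_{2d+1}` on `[0,1]^{4d}` within `1/8`. -/
theorem no_separable_approx_long_range (d : ℕ) (hd : 1 ≤ d) :
    ¬ ∃ (g₁ g₂ : (Fin (2 * d) → ℝ) → ℝ),
      ∀ x : Fin (4 * d) → ℝ, (∀ i, x i ∈ Set.Icc (0 : ℝ) 1) →
        |g₁ (fun i => x ⟨i.1, by have := i.isLt; omega⟩)
          + g₂ (fun i => x ⟨2 * d + i.1, by have := i.isLt; omega⟩)
          - x ⟨0, by omega⟩ * x ⟨2 * d, by omega⟩| ≤ 1 / 8 := by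
  rintro ⟨g₁, g₂, h⟩
  set X : ℝ → ℝ → (Fin (4 * d) → ℝ) := fun a b j =>
    if j.1 = 0 then a else if j.1 = 2 * d then b else 0 with hX
  set u : ℝ → (Fin (2 * d) → ℝ) := fun a i => if i.1 = 0 then a else 0 with hu
  have key : ∀ a b : ℝ, a ∈ Set.Icc (0:ℝ) 1 → b ∈ Set.Icc (0:ℝ) 1 →
      |g₁ (u a) + g₂ (u b) - a * b| ≤ 1 / 8 := by
    intro a b ha hb
    have hmem : ∀ i, X a b i ∈ Set.Icc (0:ℝ) 1 := by
      intro i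
      simp only [hX]
      split
      · exact ha
      · split
        · exact hb
        · exact ⟨le_refl 0, zero_le_one⟩
    have := h (X a b) hmem
    have e1 : (fun i : Fin (2 * d) => X a b ⟨i.1, by have := i.isLt; omega⟩) = u a := by
      funext i
      simp only [hX, hu]
      have : i.1 < 2 * d := i.isLt
      by_cases h0 : i.1 = 0 <;> simp [h0] <;> omega
    have e2 : (fun i : Fin (2 * d) => X a b ⟨2 * d + i.1, by have := i.isLt; omega⟩) = u b := by
      funext i
      simp only [hX, hu]
      by_cases h0 : i.1 = 0 <;> simp [h0] <;> omega
    have e3 : X a b ⟨0, by omega⟩ = a := by simp [hX]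
    have e4 : X a b ⟨2 * d, by omega⟩ = b := by
      simp only [hX]
      have : 2 * d ≠ 0 := by omega
      simp [this]
    rw [e1, e2, e3, e4] at this
    exact this
  have h00 := key 0 0 ⟨le_refl 0, zero_le_one⟩ ⟨le_refl 0, zero_le_one⟩
  have h01 := key 0 1 ⟨le_refl 0, zero_le_one⟩ ⟨zero_le_one, le_refl 1⟩
  have h10 := key 1 0 ⟨zero_le_one, le_refl 1⟩ ⟨le_refl 0, zero_le_one⟩
  have h11 := key 1 1 ⟨zero_le_one, le_refl 1⟩ ⟨zero_le_one, le_refl 1⟩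
  rw [abs_le] at h00 h01 h10 h11
  linarith [h00.1, h00.2, h01.1, h01.2, h10.1, h10.2, h11.1, h11.2]
end

section
/- For every integer d ≥ 1, 2^d / (∑_{k=0}^{⌊d/4⌋} C(d,k)) ≥ (2 / (5e)^{1/4})^d. In particular, the Hamming cube {0,1}^d admits a packing at mutual distance greater than d/4 of cardinality at least (2/(5e)^{1/4})^d, and 2/(5e)^{1/4} > 1. -/
open Finset

lemma sphere_card_le' (d k : ℕ) (x : Fin d → Bool) :
    ((univ : Finset (Fin d → Bool)).filter fun y => hammingDist x y = k).card ≤ d.choose k := by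
  classical
  have := Finset.card_le_card_of_injOn
    (f := fun y : Fin d → Bool => (univ : Finset (Fin d)).filter fun i => x i ≠ y i)
    (s := (univ : Finset (Fin d → Bool)).filter fun y => hammingDist x y = k)
    (t := Finset.powersetCard k (univ : Finset (Fin d)))
    (by
      intro y hy
      simp only [Finset.mem_coe, mem_filter, mem_univ, true_and] at hy
      simp only [Finset.mem_coe, Finset.mem_powersetCard]
      exact ⟨Finset.subset_univ _, hy⟩)
    (by
      intro y hy y' hy' h
      simp only at h
      funext i
      have hi : (x i ≠ y i) ↔ (x i ≠ y' i) := by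
        constructor <;> intro hh
        · have : i ∈ (univ : Finset (Fin d)).filter fun i => x i ≠ y' i := by
            rw [← h]; simp [hh]
          simpa using this
        · have : i ∈ (univ : Finset (Fin d)).filter fun i => x i ≠ y i := by
            rw [h]; simp [hh]
          simpa using this
      cases hx : x i <;> cases hy1 : y i <;> cases hy2 : y' i <;> simp_all)
  simpa using this

lemma ball_card_le' (d m : ℕ) (x : Fin d → Bool) :
    ((univ : Finset (Fin d → Bool)).filter fun y => hammingDist x y ≤ m).card
      ≤ ∑ k ∈ Finset.range (m + 1), d.choose k := by
  classical
  have hsub : ((univ : Finset (Fin d → Bool)).filter fun y => hammingDist x y ≤ m)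
      ⊆ (Finset.range (m + 1)).biUnion
        (fun k => (univ : Finset (Fin d → Bool)).filter fun y => hammingDist x y = k) := by
    intro y hy
    simp only [mem_filter, mem_univ, true_and] at hy
    simp only [Finset.mem_biUnion, Finset.mem_range, mem_filter, mem_univ, true_and]
    exact ⟨hammingDist x y, Nat.lt_succ_of_le hy, rfl⟩
  calc _ ≤ _ := Finset.card_le_card hsub
    _ ≤ ∑ k ∈ Finset.range (m + 1),
          ((univ : Finset (Fin d → Bool)).filter fun y => hammingDist x y = k).card :=
        Finset.card_biUnion_le
    _ ≤ _ := Finset.sum_le_sum fun k _ => sphere_card_le' d k x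

-- maximal packing gives covering count: 2^d ≤ |S| * B
lemma exists_packing (d m : ℕ) :
    ∃ S : Finset (Fin d → Bool),
      (∀ x ∈ S, ∀ y ∈ S, x ≠ y → m < hammingDist x y) ∧
      2 ^ d ≤ S.card * ∑ k ∈ Finset.range (m + 1), d.choose k := by
  classical
  set P : Finset (Fin d → Bool) → Prop :=
    fun S => ∀ x ∈ S, ∀ y ∈ S, x ≠ y → m < hammingDist x y with hP
  have hne : ((univ : Finset (Finset (Fin d → Bool))).filter P).Nonempty :=
    ⟨∅, by simp [hP]⟩
  obtain ⟨S, hS, hmax⟩ := Finset.exists_max_image _ Finset.card hne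
  simp only [mem_filter, mem_univ, true_and] at hS
  refine ⟨S, hS, ?_⟩
  -- covering
  have hcov : ∀ y : Fin d → Bool, ∃ x ∈ S, hammingDist x y ≤ m := by
    intro y
    by_contra hc
    push_neg at hc
    have hyS : y ∉ S := fun h => absurd (hc y h) (by simp)
    have hins : P (insert y S) := by
      intro a ha b hb hab
      rcases Finset.mem_insert.mp ha with ha | ha
      · rcases Finset.mem_insert.mp hb with hb | hb
        · exact absurd (ha.trans hb.symm) hab
        · rw [ha, hammingDist_comm]; exact hc b hb
      · rcases Finset.mem_insert.mp hb with hb | hb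
        · rw [hb]; exact hc a ha
        · exact hS a ha b hb hab
    have := hmax (insert y S) (Finset.mem_filter.mpr ⟨Finset.mem_univ _, hins⟩)
    rw [Finset.card_insert_of_notMem hyS] at this
    omega
  have hcover : (univ : Finset (Fin d → Bool)) ⊆
      S.biUnion (fun x => (univ : Finset (Fin d → Bool)).filter fun y => hammingDist x y ≤ m) := by
    intro y _
    obtain ⟨x, hx, hxy⟩ := hcov y
    exact Finset.mem_biUnion.mpr ⟨x, hx, by simp [hxy]⟩
  have h1 : (2 : ℕ) ^ d = (univ : Finset (Fin d → Bool)).card := by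
    simp [Finset.card_univ]
  calc (2:ℕ) ^ d = _ := h1
    _ ≤ _ := Finset.card_le_card hcover
    _ ≤ ∑ x ∈ S, ((univ : Finset (Fin d → Bool)).filter fun y => hammingDist x y ≤ m).card :=
        Finset.card_biUnion_le
    _ ≤ ∑ _x ∈ S, ∑ k ∈ Finset.range (m + 1), d.choose k :=
        Finset.sum_le_sum fun x _ => ball_card_le' d m x
    _ = S.card * ∑ k ∈ Finset.range (m + 1), d.choose k := by
        rw [Finset.sum_const, smul_eq_mul]

-- analytic bound: ∑_{k≤d/4} C(d,k) ≤ ((5e)^{1/4})^d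
lemma sum_choose_le (d : ℕ) :
    ∑ k ∈ Finset.range (d / 4 + 1), (d.choose k : ℝ)
      ≤ ((5 * Real.exp 1) ^ ((1 : ℝ) / 4)) ^ d := by
  set m := d / 4 with hm
  have hmd : m ≤ d := by omega
  have h1 : ∑ k ∈ Finset.range (m + 1), (d.choose k : ℝ)
      ≤ (3 : ℝ) ^ m * (4 / 3) ^ d := by
    have step1 : ∑ k ∈ Finset.range (m + 1), (d.choose k : ℝ)
        ≤ ∑ k ∈ Finset.range (m + 1), (3 : ℝ) ^ m * ((d.choose k : ℝ) * (1 / 3) ^ k) := by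
      apply Finset.sum_le_sum
      intro k hk
      have hk' : k ≤ m := Nat.lt_succ_iff.mp (Finset.mem_range.mp hk)
      have h3 : (1 : ℝ) ≤ (3 : ℝ) ^ m * (1 / 3) ^ k := by
        have h3' : (3:ℝ)^k ≤ 3^m := pow_le_pow_right₀ (by norm_num) hk'
        rw [one_div, inv_pow, ← div_eq_mul_inv, le_div_iff₀ (by positivity), one_mul]
        exact h3'
      calc (d.choose k : ℝ) = (d.choose k : ℝ) * 1 := by ring
        _ ≤ (d.choose k : ℝ) * ((3 : ℝ) ^ m * (1 / 3) ^ k) := by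
            apply mul_le_mul_of_nonneg_left h3 (by positivity)
        _ = (3 : ℝ) ^ m * ((d.choose k : ℝ) * (1 / 3) ^ k) := by ring
    have step2 : ∑ k ∈ Finset.range (m + 1), (3 : ℝ) ^ m * ((d.choose k : ℝ) * (1 / 3) ^ k)
        ≤ (3 : ℝ) ^ m * ∑ k ∈ Finset.range (d + 1), (d.choose k : ℝ) * (1 / 3) ^ k := by
      rw [Finset.mul_sum]
      apply Finset.sum_le_sum_of_subset_of_nonneg
      · exact Finset.range_subset_range.mpr (by omega)
      · intro k _ _; positivity
    have hbin : ∑ k ∈ Finset.range (d + 1), (d.choose k : ℝ) * (1 / 3) ^ k = (4 / 3) ^ d := by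
      have := add_pow (1 / 3 : ℝ) 1 d
      simp only [one_pow, mul_one] at this
      rw [show (4 / 3 : ℝ) = 1 / 3 + 1 by norm_num, this]
      apply Finset.sum_congr rfl
      intro k _
      ring
    calc _ ≤ _ := step1
      _ ≤ _ := step2
      _ = (3 : ℝ) ^ m * (4 / 3) ^ d := by rw [hbin]
  -- now (3:ℝ)^m * (4/3)^d ≤ ((5e)^{1/4})^d
  have he : (2.7 : ℝ) < Real.exp 1 :=
    lt_trans (by norm_num) Real.exp_one_gt_d9
  have hkey : (3 : ℝ) * (4 / 3) ^ 4 ≤ 5 * Real.exp 1 := by nlinarith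
  have h5e : (1 : ℝ) ≤ 5 * Real.exp 1 := by nlinarith
  have h2 : (3 : ℝ) ^ m * (4 / 3) ^ d ≤ ((5 * Real.exp 1) ^ ((1 : ℝ) / 4)) ^ d := by
    have hrw : ((5 * Real.exp 1) ^ ((1 : ℝ) / 4)) ^ d
        = (5 * Real.exp 1) ^ ((d : ℝ) / 4) := by
      rw [← Real.rpow_natCast ((5 * Real.exp 1) ^ ((1:ℝ)/4)) d, ← Real.rpow_mul (by positivity)]
      ring_nf
    rw [hrw]
    have h3m : (3 : ℝ) ^ m ≤ (3 : ℝ) ^ ((d : ℝ) / 4) := by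
      rw [← Real.rpow_natCast 3 m]
      apply Real.rpow_le_rpow_of_exponent_le (by norm_num)
      rw [hm]
      have hq : (4 * (d / 4) : ℕ) ≤ d := Nat.mul_div_le d 4
      have hq' : (4:ℝ) * ((d / 4 : ℕ) : ℝ) ≤ (d : ℝ) := by exact_mod_cast hq
      linarith
    have h43 : ((4 : ℝ) / 3) ^ d = ((4 / 3 : ℝ) ^ (4 : ℝ)) ^ ((d : ℝ) / 4) := by
      rw [← Real.rpow_natCast (4/3 : ℝ) d, ← Real.rpow_mul (by norm_num)]
      congr 1
      ring
    calc (3 : ℝ) ^ m * (4 / 3) ^ d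
        ≤ (3 : ℝ) ^ ((d : ℝ) / 4) * ((4 / 3 : ℝ) ^ (4 : ℝ)) ^ ((d : ℝ) / 4) := by
          rw [← h43]; exact mul_le_mul_of_nonneg_right h3m (by positivity)
      _ = ((3 : ℝ) * (4 / 3 : ℝ) ^ (4 : ℝ)) ^ ((d : ℝ) / 4) := by
          rw [Real.mul_rpow (by norm_num) (by positivity)]
      _ ≤ (5 * Real.exp 1) ^ ((d : ℝ) / 4) := by
          apply Real.rpow_le_rpow (by positivity) _ (by positivity)
          rw [show ((4 : ℝ)) = ((4 : ℕ) : ℝ) by norm_num, Real.rpow_natCast]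
          exact hkey
  linarith

/-- For every `d ≥ 1`, `2^d / ∑_{k ≤ ⌊d/4⌋} C(d,k) ≥ (2/(5e)^{1/4})^d`; in particular the
Hamming cube `{0,1}^d` admits a packing at mutual distance greater than `⌊d/4⌋` of
cardinality at least `(2/(5e)^{1/4})^d`, and `2/(5e)^{1/4} > 1`. -/
theorem hamming_quarter_packing (d : ℕ) (hd : 1 ≤ d) :
    ((2 / (5 * Real.exp 1) ^ ((1 : ℝ) / 4)) ^ d
        ≤ (2 : ℝ) ^ d / ∑ k ∈ Finset.range (d / 4 + 1), (d.choose k : ℝ)) ∧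
    (∃ S : Finset (Fin d → Bool),
        (∀ x ∈ S, ∀ y ∈ S, x ≠ y → d / 4 < hammingDist x y) ∧
        (2 / (5 * Real.exp 1) ^ ((1 : ℝ) / 4)) ^ d ≤ (S.card : ℝ)) ∧
    1 < 2 / (5 * Real.exp 1) ^ ((1 : ℝ) / 4) := by
  have hbase : (0 : ℝ) < (5 * Real.exp 1) ^ ((1 : ℝ) / 4) := by positivity
  have hBsum : (0 : ℝ) < ∑ k ∈ Finset.range (d / 4 + 1), (d.choose k : ℝ) := by
    apply Finset.sum_pos' (fun k _ => by positivity)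
    exact ⟨0, by simp⟩
  have hsum := sum_choose_le d
  have hpow : (0 : ℝ) < ((5 * Real.exp 1) ^ ((1 : ℝ) / 4)) ^ d := by positivity
  have hmain : (2 / (5 * Real.exp 1) ^ ((1 : ℝ) / 4)) ^ d
      ≤ (2 : ℝ) ^ d / ∑ k ∈ Finset.range (d / 4 + 1), (d.choose k : ℝ) := by
    rw [div_pow, div_le_div_iff₀ hpow hBsum]
    calc (2 : ℝ) ^ d * ∑ k ∈ Finset.range (d / 4 + 1), (d.choose k : ℝ)
        ≤ (2 : ℝ) ^ d * ((5 * Real.exp 1) ^ ((1 : ℝ) / 4)) ^ d :=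
          mul_le_mul_of_nonneg_left hsum (by positivity)
      _ = _ := by ring
  refine ⟨hmain, ?_, ?_⟩
  · obtain ⟨S, hSpack, hScount⟩ := exists_packing d (d / 4)
    refine ⟨S, hSpack, ?_⟩
    have hScount' : (2 : ℝ) ^ d ≤ (S.card : ℝ) * ∑ k ∈ Finset.range (d / 4 + 1), (d.choose k : ℝ) := by
      exact_mod_cast hScount
    calc (2 / (5 * Real.exp 1) ^ ((1 : ℝ) / 4)) ^ d
        ≤ (2 : ℝ) ^ d / ∑ k ∈ Finset.range (d / 4 + 1), (d.choose k : ℝ) := hmain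
      _ ≤ (S.card : ℝ) := by
          rw [div_le_iff₀ hBsum]
          exact hScount'
  · have he : Real.exp 1 < 2.7182818286 := Real.exp_one_lt_d9
    have h16 : (5 : ℝ) * Real.exp 1 < 16 := by nlinarith
    have : (5 * Real.exp 1) ^ ((1 : ℝ) / 4) < 2 := by
      have h2 : (2 : ℝ) = (16 : ℝ) ^ ((1 : ℝ) / 4) := by
        rw [show (16 : ℝ) = 2 ^ (4 : ℕ) by norm_num, ← Real.rpow_natCast 2 4,
          ← Real.rpow_mul (by norm_num)]
        norm_num
      rw [h2]
      apply Real.rpow_lt_rpow (by positivity) h16 (by norm_num)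
    rw [lt_div_iff₀ hbase]
    linarith
end
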